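/- arXiv:1508.04404 — 2 statements merged into one kernel-verified Lean document; each statement's English description precedes it below -/
import Mathlib

section
/- Let G be a group and N a perfect normal subgroup of G (i.e. N = [N,N]) which has a complement in G. Then the sequence J̃(N) → J̃(G) → J̃(G/N) → 1 is exact, where the first map is induced by the inclusion N → G and the second by the quotient map G → G/N; that is, the second map is surjective and its kernel equals the image of the first map. (Topologically this is the exact sequence π₂ˢ(K(N,1)) → π₂ˢ(K(G,1)) → π₂ˢ(K(G/N,1)) → 0.) -/
/- Nonabelian tensor square framework (Brown–Loday). -/

namespace NATensor

variable (G : Type*) [Group G]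

/-- The relator set for the nonabelian tensor square of `G`:
`g g' ⊗ h = (ᵍg' ⊗ ᵍh)(g ⊗ h)` and `g ⊗ h h' = (g ⊗ h)(ʰg ⊗ ʰh')`. -/
def rels : Set (FreeGroup (G × G)) :=
  {r | (∃ g g' h : G,
          r = FreeGroup.of (g * g', h) *
              (FreeGroup.of (g * g' * g⁻¹, g * h * g⁻¹) * FreeGroup.of (g, h))⁻¹) ∨
       (∃ g h h' : G,
          r = FreeGroup.of (g, h * h') *
              (FreeGroup.of (g, h) * FreeGroup.of (h * g * h⁻¹, h * h' * h⁻¹))⁻¹)}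

/-- The nonabelian tensor square `G ⊗ G`. -/
abbrev TS := PresentedGroup (rels G)

variable {G}

/-- The generator `g ⊗ h` of the nonabelian tensor square. -/
def tmul (g h : G) : TS G := PresentedGroup.of (g, h)

lemma mk_rel_eq_one {r : FreeGroup (G × G)} (hr : r ∈ rels G) :
    (PresentedGroup.mk (rels G) r : TS G) = 1 :=
  (QuotientGroup.eq_one_iff r).mpr (Subgroup.subset_normalClosure hr)

lemma tmul_rel₁ (g g' h : G) :
    tmul (g * g') h = tmul (g * g' * g⁻¹) (g * h * g⁻¹) * tmul g h := by
  have h1 := mk_rel_eq_one (G := G) (Or.inl ⟨g, g', h, rfl⟩)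
  simp only [map_mul, map_inv, mul_inv_eq_one] at h1
  exact h1

lemma tmul_rel₂ (g h h' : G) :
    tmul g (h * h') = tmul g h * tmul (h * g * h⁻¹) (h * h' * h⁻¹) := by
  have h1 := mk_rel_eq_one (G := G) (Or.inr ⟨g, h, h', rfl⟩)
  simp only [map_mul, map_inv, mul_inv_eq_one] at h1
  exact h1

variable (G)

/-- The homomorphism `κ : G ⊗ G → G`, `g ⊗ h ↦ [g,h] = g h g⁻¹ h⁻¹` (its image is `[G,G]`). -/
def kappa : TS G →* G :=
  PresentedGroup.toGroup (f := fun x : G × G => x.1 * x.2 * x.1⁻¹ * x.2⁻¹) (by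
    rintro r (⟨g, g', h, rfl⟩ | ⟨g, h, h', rfl⟩) <;>
      simp only [map_mul, map_inv, FreeGroup.lift_apply_of] <;> group)

variable {G}

@[simp] lemma kappa_tmul (g h : G) : kappa G (tmul g h) = g * h * g⁻¹ * h⁻¹ :=
  PresentedGroup.toGroup.of _

variable (G)

/-- `J(G) = ker κ ≅ π₃(SK(G,1))`. -/
def J : Subgroup (TS G) := (kappa G).ker

/-- `∇(G)`: the (normal) subgroup of `G ⊗ G` generated by the elements `x ⊗ x`. -/
def nabla : Subgroup (TS G) :=
  Subgroup.normalClosure {t | ∃ x : G, t = tmul x x}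

/-- `Δ(G)`: the (normal) subgroup of `G ⊗ G` generated by the `(x ⊗ y)(y ⊗ x)`. -/
def delta : Subgroup (TS G) :=
  Subgroup.normalClosure {t | ∃ x y : G, t = tmul x y * tmul y x}

instance : (nabla G).Normal := Subgroup.normalClosure_normal

instance : (delta G).Normal := Subgroup.normalClosure_normal

/-- The exterior square `G ∧ G = (G ⊗ G)/∇(G)`. -/
abbrev ES := TS G ⧸ nabla G

/-- The symmetric square `G ⊗̃ G = (G ⊗ G)/Δ(G)`. -/
abbrev SS := TS G ⧸ delta G

variable {G}

/-- The element `g ∧ h` of the exterior square. -/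
def emul (g h : G) : ES G := QuotientGroup.mk' (nabla G) (tmul g h)

/-- The image of `g ⊗ h` in the symmetric square. -/
def smul (g h : G) : SS G := QuotientGroup.mk' (delta G) (tmul g h)

variable {H : Type*} [Group H]

/-- The induced homomorphism `G ⊗ G → H ⊗ H` of a homomorphism `f : G → H`. -/
def tmap (f : G →* H) : TS G →* TS H :=
  PresentedGroup.toGroup (f := fun x : G × G => tmul (f x.1) (f x.2)) (by
    rintro r (⟨g, g', h, rfl⟩ | ⟨g, h, h', rfl⟩) <;>
      simp only [map_mul, map_inv, FreeGroup.lift_apply_of, mul_inv_eq_one]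
    · rw [tmul_rel₁]
    · rw [tmul_rel₂])

@[simp] lemma tmap_tmul (f : G →* H) (g h : G) :
    tmap f (tmul g h) = tmul (f g) (f h) :=
  PresentedGroup.toGroup.of _

lemma nabla_le_comap_nabla (f : G →* H) :
    nabla G ≤ MonoidHom.ker ((QuotientGroup.mk' (nabla H)).comp (tmap f)) := by
  refine Subgroup.normalClosure_le_normal ?_
  rintro _ ⟨y, rfl⟩
  simp only [SetLike.mem_coe, MonoidHom.mem_ker, MonoidHom.comp_apply, tmap_tmul,
    QuotientGroup.mk'_apply, QuotientGroup.eq_one_iff]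
  exact Subgroup.subset_normalClosure ⟨f y, rfl⟩

lemma delta_le_comap_delta (f : G →* H) :
    delta G ≤ MonoidHom.ker ((QuotientGroup.mk' (delta H)).comp (tmap f)) := by
  refine Subgroup.normalClosure_le_normal ?_
  rintro _ ⟨x, y, rfl⟩
  simp only [SetLike.mem_coe, MonoidHom.mem_ker, MonoidHom.comp_apply, map_mul, tmap_tmul,
    QuotientGroup.mk'_apply, ← QuotientGroup.mk_mul, QuotientGroup.eq_one_iff]
  exact Subgroup.subset_normalClosure ⟨f x, f y, rfl⟩

/-- The induced homomorphism `G ∧ G → H ∧ H` of a homomorphism `f : G → H`. -/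
def emap (f : G →* H) : ES G →* ES H :=
  QuotientGroup.lift (nabla G) ((QuotientGroup.mk' (nabla H)).comp (tmap f))
    (fun x hx => MonoidHom.mem_ker.mp (nabla_le_comap_nabla f hx))

@[simp] lemma emap_emul (f : G →* H) (g h : G) :
    emap f (emul g h) = emul (f g) (f h) := by
  simp [emap, emul, QuotientGroup.mk'_apply, QuotientGroup.lift_mk']
  rfl

/-- The induced homomorphism `G ⊗̃ G → H ⊗̃ H` of a homomorphism `f : G → H`. -/
def smap (f : G →* H) : SS G →* SS H :=
  QuotientGroup.lift (delta G) ((QuotientGroup.mk' (delta H)).comp (tmap f))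
    (fun x hx => MonoidHom.mem_ker.mp (delta_le_comap_delta f hx))

variable (G)

lemma nabla_le_ker_kappa : nabla G ≤ (kappa G).ker := by
  refine Subgroup.normalClosure_le_normal ?_
  rintro _ ⟨x, rfl⟩
  simp only [SetLike.mem_coe, MonoidHom.mem_ker, kappa_tmul]
  group

/-- The homomorphism `κ' : G ∧ G → G`, `g ∧ h ↦ [g,h]` (its image is `[G,G]`). -/
def kappa' : ES G →* G :=
  QuotientGroup.lift (nabla G) (kappa G)
    (fun x hx => MonoidHom.mem_ker.mp (nabla_le_ker_kappa G hx))

/-- The Schur multiplier `M(G) = ker κ' ≅ H₂(G)`. -/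
def M : Subgroup (ES G) := (kappa' G).ker

/-- `J̃(G) = J(G)/Δ(G) ≅ π₂ˢ(K(G,1))`, realized as the image of `J(G)` in `G ⊗̃ G`. -/
def Jt : Subgroup (SS G) := Subgroup.map (QuotientGroup.mk' (delta G)) (J G)

/-- `∇(G)/Δ(G)`, realized as the image of `∇(G)` in `G ⊗̃ G`. -/
def nablaBar : Subgroup (SS G) := Subgroup.map (QuotientGroup.mk' (delta G)) (nabla G)

end NATensor

/-! ### Auxiliary lemmas -/

namespace NATensor

variable {G : Type*} [Group G] {H : Type*} [Group H] {K : Type*} [Group K]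

lemma of_eq_tmul (x : G × G) : (PresentedGroup.of x : TS G) = tmul x.1 x.2 := rfl

lemma one_tmul (h : G) : tmul (1 : G) h = 1 := by
  have h1 := tmul_rel₁ (1 : G) 1 h
  simp only [one_mul, mul_one, inv_one] at h1
  exact left_eq_mul.mp h1

lemma tmul_one (g : G) : tmul g (1 : G) = 1 := by
  have h1 := tmul_rel₂ g (1 : G) 1
  simp only [one_mul, mul_one, inv_one] at h1
  exact left_eq_mul.mp h1

lemma tmap_comp (f : H →* K) (f' : G →* H) :
    (tmap f).comp (tmap f') = tmap (f.comp f') := by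
  apply PresentedGroup.ext
  rintro ⟨a, b⟩
  simp [of_eq_tmul]

lemma tmap_tmap (f : H →* K) (f' : G →* H) (u : TS G) :
    tmap f (tmap f' u) = tmap (f.comp f') u :=
  DFunLike.congr_fun (tmap_comp f f') u

lemma tmap_id (u : TS G) : tmap (MonoidHom.id G) u = u := by
  have h : tmap (MonoidHom.id G) = MonoidHom.id (TS G) := by
    apply PresentedGroup.ext
    rintro ⟨a, b⟩
    simp [of_eq_tmul]
  rw [h]
  rfl

lemma tmap_eq_one (f : G →* H) (hf : ∀ g, f g = 1) (u : TS G) : tmap f u = 1 := by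
  have h : tmap f = (1 : TS G →* TS H) := by
    apply PresentedGroup.ext
    rintro ⟨a, b⟩
    simp [of_eq_tmul, hf, one_tmul]
  rw [h]
  rfl

lemma kappa_tmap (f : G →* H) (u : TS G) : kappa H (tmap f u) = f (kappa G u) := by
  have h : (kappa H).comp (tmap f) = f.comp (kappa G) := by
    apply PresentedGroup.ext
    rintro ⟨a, b⟩
    simp [of_eq_tmul]
  exact DFunLike.congr_fun h u

lemma smap_mk (f : G →* H) (x : TS G) :
    smap f (QuotientGroup.mk' (delta G) x) = QuotientGroup.mk' (delta H) (tmap f x) := rfl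

lemma delta_le_ker_kappa : delta G ≤ (kappa G).ker := by
  refine Subgroup.normalClosure_le_normal ?_
  rintro _ ⟨x, y, rfl⟩
  simp only [SetLike.mem_coe, MonoidHom.mem_ker, map_mul, kappa_tmul]
  group

lemma tmul_swap_aux (g g' h h' : G) :
    tmul (g*h*g'*(g*h)⁻¹) (g*h*h'*(g*h)⁻¹) * tmul g h
      = tmul g h * tmul (h*g*g'*(h*g)⁻¹) (h*g*h'*(h*g)⁻¹) := by
  have w1 : tmul (g*g') (h*h')
      = tmul (g*g'*g⁻¹) (g*h*g⁻¹) *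
        (tmul (g*h*g'*(g*h)⁻¹) (g*h*h'*(g*h)⁻¹) *
          (tmul g h * tmul (h*g*h⁻¹) (h*h'*h⁻¹))) := by
    rw [tmul_rel₁ g g' (h*h'), tmul_rel₂ g h h']
    rw [show g*(h*h')*g⁻¹ = (g*h*g⁻¹) * (g*h'*g⁻¹) by group]
    rw [tmul_rel₂ (g*g'*g⁻¹) (g*h*g⁻¹) (g*h'*g⁻¹)]
    rw [show (g*h*g⁻¹)*(g*g'*g⁻¹)*(g*h*g⁻¹)⁻¹ = g*h*g'*(g*h)⁻¹ by group,
        show (g*h*g⁻¹)*(g*h'*g⁻¹)*(g*h*g⁻¹)⁻¹ = g*h*h'*(g*h)⁻¹ by group]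
    simp only [mul_assoc]
  have w2 : tmul (g*g') (h*h')
      = tmul (g*g'*g⁻¹) (g*h*g⁻¹) *
        (tmul g h * (tmul (h*g*g'*(h*g)⁻¹) (h*g*h'*(h*g)⁻¹) * tmul (h*g*h⁻¹) (h*h'*h⁻¹))) := by
    rw [tmul_rel₂ (g*g') h h', tmul_rel₁ g g' h]
    rw [show h*(g*g')*h⁻¹ = (h*g*h⁻¹) * (h*g'*h⁻¹) by group]
    rw [tmul_rel₁ (h*g*h⁻¹) (h*g'*h⁻¹) (h*h'*h⁻¹)]
    rw [show (h*g*h⁻¹)*(h*g'*h⁻¹)*(h*g*h⁻¹)⁻¹ = h*g*g'*(h*g)⁻¹ by group,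
        show (h*g*h⁻¹)*(h*h'*h⁻¹)*(h*g*h⁻¹)⁻¹ = h*g*h'*(h*g)⁻¹ by group]
    simp only [mul_assoc]
  have e := w1.symm.trans w2
  have e2 := mul_left_cancel e
  simp only [← mul_assoc] at e2
  exact mul_right_cancel e2

/-- Conjugation identity on generators:
`(g ⊗ h)(a ⊗ b) = (ᶜa ⊗ ᶜb)(g ⊗ h)` with `c = [g,h]`. -/
lemma tmul_mul_tmul (g h a b : G) :
    tmul g h * tmul a b
      = tmul (g*h*g⁻¹*h⁻¹ * a * (g*h*g⁻¹*h⁻¹)⁻¹) (g*h*g⁻¹*h⁻¹ * b * (g*h*g⁻¹*h⁻¹)⁻¹)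
          * tmul g h := by
  have e := tmul_swap_aux g ((h*g)⁻¹*a*(h*g)) h ((h*g)⁻¹*b*(h*g))
  rw [show h*g*((h*g)⁻¹*a*(h*g))*(h*g)⁻¹ = a by group,
      show h*g*((h*g)⁻¹*b*(h*g))*(h*g)⁻¹ = b by group,
      show g*h*((h*g)⁻¹*a*(h*g))*(g*h)⁻¹ = g*h*g⁻¹*h⁻¹ * a * (g*h*g⁻¹*h⁻¹)⁻¹ by group,
      show g*h*((h*g)⁻¹*b*(h*g))*(g*h)⁻¹ = g*h*g⁻¹*h⁻¹ * b * (g*h*g⁻¹*h⁻¹)⁻¹ by group] at e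
  exact e.symm

/-- Full conjugation formula: conjugation in `G ⊗ G` is the `κ`-image acting diagonally. -/
lemma conj_tmul (s : TS G) : ∀ a b : G,
    s * tmul a b * s⁻¹
      = tmul (kappa G s * a * (kappa G s)⁻¹) (kappa G s * b * (kappa G s)⁻¹) := by
  have hs : s ∈ Subgroup.closure (Set.range (PresentedGroup.of : G × G → TS G)) := by
    rw [PresentedGroup.closure_range_of]; trivial
  induction hs using Subgroup.closure_induction with
  | mem x hx =>
      obtain ⟨⟨g, h⟩, rfl⟩ := hx
      intro a b
      rw [of_eq_tmul]
      have := tmul_mul_tmul g h a b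
      simp only [kappa_tmul]
      rw [show (tmul g h * tmul a b * (tmul g h)⁻¹ : TS G)
            = (tmul g h * tmul a b) * (tmul g h)⁻¹ by group, this]
      group
  | one => intro a b; simp
  | mul x y _ _ ihx ihy =>
      intro a b
      have h1 := ihy a b
      have h2 := ihx (kappa G y * a * (kappa G y)⁻¹) (kappa G y * b * (kappa G y)⁻¹)
      rw [map_mul]
      rw [show kappa G x * kappa G y * a * (kappa G x * kappa G y)⁻¹
            = kappa G x * (kappa G y * a * (kappa G y)⁻¹) * (kappa G x)⁻¹ by group,
          show kappa G x * kappa G y * b * (kappa G x * kappa G y)⁻¹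
            = kappa G x * (kappa G y * b * (kappa G y)⁻¹) * (kappa G x)⁻¹ by group]
      rw [← h2, ← h1]
      group
  | inv x _ ihx =>
      intro a b
      have h1 := ihx ((kappa G x)⁻¹ * a * kappa G x) ((kappa G x)⁻¹ * b * kappa G x)
      rw [show kappa G x * ((kappa G x)⁻¹ * a * kappa G x) * (kappa G x)⁻¹ = a by group,
          show kappa G x * ((kappa G x)⁻¹ * b * kappa G x) * (kappa G x)⁻¹ = b by group] at h1
      rw [map_inv]
      rw [show (kappa G x)⁻¹ * a * ((kappa G x)⁻¹)⁻¹ = (kappa G x)⁻¹ * a * kappa G x by group,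
          show (kappa G x)⁻¹ * b * ((kappa G x)⁻¹)⁻¹ = (kappa G x)⁻¹ * b * kappa G x by group]
      rw [← h1]
      group

lemma conj_eq_tmap (s : TS G) (u : TS G) :
    s * u * s⁻¹ = tmap (MulAut.conj (kappa G s)).toMonoidHom u := by
  have h : ((MulAut.conj s).toMonoidHom : TS G →* TS G)
      = tmap (MulAut.conj (kappa G s)).toMonoidHom := by
    apply PresentedGroup.ext
    rintro ⟨a, b⟩
    simp only [MulEquiv.coe_toMonoidHom, MulAut.conj_apply, of_eq_tmul, tmap_tmul]
    exact conj_tmul s a b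
  have h2 := DFunLike.congr_fun h u
  simpa only [MulEquiv.coe_toMonoidHom, MulAut.conj_apply] using h2

lemma range_tmap_subtype_normal (N : Subgroup G) [N.Normal] :
    ((tmap N.subtype).range).Normal := by
  constructor
  intro x hx g
  obtain ⟨w, rfl⟩ := hx
  rw [conj_eq_tmap g (tmap N.subtype w), tmap_tmap]
  have hcomp : (MulAut.conj (kappa G g)).toMonoidHom.comp N.subtype
      = N.subtype.comp (MulAut.conjNormal (kappa G g)).toMonoidHom := by
    ext n
    simp
  rw [hcomp, ← tmap_tmap]
  exact ⟨_, rfl⟩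

open scoped commutatorElement in
/-- The core of the hard direction: if `y` is in the kernels of both `tmap π` and `κ`,
then its class mod `Δ(G)` is in the image of `J̃(N)`. -/
lemma core_mem {N : Subgroup G} [N.Normal] (hperf : commutator ↥N = ⊤)
    (σ : (G ⧸ N) →* G) (hσ : ∀ q, QuotientGroup.mk' N (σ q) = q)
    (y : TS G) (hyπ : tmap (QuotientGroup.mk' N) y = 1) (hyκ : kappa G y = 1) :
    QuotientGroup.mk' (delta G) y ∈ Subgroup.map (smap N.subtype) (Jt ↥N) := by
  set π := QuotientGroup.mk' N with hπdef
  set ι := N.subtype with hιdef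
  set L : Subgroup (SS G) := Subgroup.map (QuotientGroup.mk' (delta G)) (tmap ι).range with hLdef
  haveI hLnormal : L.Normal :=
    (range_tmap_subtype_normal N).map _ (QuotientGroup.mk'_surjective _)
  set φ : TS G →* (SS G) ⧸ L :=
    (QuotientGroup.mk' L).comp (QuotientGroup.mk' (delta G)) with hφdef
  have hφ_iff : ∀ x : TS G, φ x = 1 ↔ QuotientGroup.mk' (delta G) x ∈ L := by
    intro x
    rw [hφdef, MonoidHom.comp_apply, QuotientGroup.mk'_apply, QuotientGroup.eq_one_iff]
  have φ0 : ∀ a b : G, a ∈ N → b ∈ N → φ (tmul a b) = 1 := by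
    intro a b ha hb
    rw [hφ_iff]
    refine ⟨tmap ι (tmul (⟨a, ha⟩ : N) ⟨b, hb⟩), ⟨_, rfl⟩, ?_⟩
    rw [tmap_tmul]
    rfl
  have φswap : ∀ a b : G, φ (tmul b a) = (φ (tmul a b))⁻¹ := by
    intro a b
    have h1 : QuotientGroup.mk' (delta G) (tmul a b * tmul b a) = 1 :=
      (QuotientGroup.eq_one_iff _).mpr (Subgroup.subset_normalClosure ⟨a, b, rfl⟩)
    have h2 : φ (tmul a b * tmul b a) = 1 := by
      rw [hφdef, MonoidHom.comp_apply, h1, map_one]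
    rw [map_mul] at h2
    exact eq_inv_of_mul_eq_one_right h2
  have φcongr : ∀ a z z' : G, a ∈ N → π z = π z' → φ (tmul a z) = φ (tmul a z') := by
    intro a z z' ha hzz
    have hN : z⁻¹ * z' ∈ N := by
      have := hzz
      rw [hπdef, QuotientGroup.mk'_apply, QuotientGroup.mk'_apply] at this
      exact QuotientGroup.eq.mp this
    have hrel := tmul_rel₂ a z (z⁻¹ * z')
    rw [show z * (z⁻¹ * z') = z' by group] at hrel
    have hN2 : z' * z⁻¹ ∈ N := by
      have := Subgroup.Normal.conj_mem ‹N.Normal› _ hN z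
      rwa [show z*(z⁻¹*z')*z⁻¹ = z'*z⁻¹ by group] at this
    rw [hrel, map_mul, φ0 _ _ (Subgroup.Normal.conj_mem ‹N.Normal› a ha z) hN2, mul_one]
  have hπconj : ∀ (a z : G), a ∈ N → π (a * z * a⁻¹) = π z := by
    intro a z ha
    have h1 : π a = 1 := by
      rw [hπdef, QuotientGroup.mk'_apply, QuotientGroup.eq_one_iff]
      exact ha
    rw [map_mul, map_mul, h1, map_inv, h1]
    group
  have F2 : ∀ a b z : G, a ∈ N → b ∈ N →
      φ (tmul (a*b) z) = φ (tmul (a*b*a⁻¹) z) * φ (tmul a z) := by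
    intro a b z ha hb
    rw [tmul_rel₁ a b z, map_mul]
    congr 1
    exact φcongr _ _ _ (Subgroup.Normal.conj_mem ‹N.Normal› b hb a) (hπconj a z ha)
  have φhom : ∀ a b z : G, a ∈ N → b ∈ N →
      φ (tmul (a*b) z) = φ (tmul a z) * φ (tmul b z) := by
    have H1 : ∀ a b z : G, a ∈ N → b ∈ N → φ (tmul b z) = φ (tmul (b*a⁻¹) z) * φ (tmul a z) := by
      intro a b z ha hb
      have h := F2 a (a⁻¹*b) z ha (mul_mem (inv_mem ha) hb)
      rw [show a*(a⁻¹*b) = b by group] at h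
      exact h
    intro a b z ha hb
    have h := H1 b (a*b) z hb (mul_mem ha hb)
    rw [show a*b*b⁻¹ = a by group] at h
    exact h
  have φinvN : ∀ a z : G, a ∈ N → φ (tmul a⁻¹ z) = (φ (tmul a z))⁻¹ := by
    intro a z ha
    have h := φhom a a⁻¹ z ha (inv_mem ha)
    rw [mul_inv_cancel, one_tmul, map_one] at h
    exact eq_inv_of_mul_eq_one_right h.symm
  -- main vanishing result
  have φmain : ∀ (z a : G), a ∈ N → φ (tmul a z) = 1 := by
    intro z
    set q : ↥N →* (SS G) ⧸ L := MonoidHom.mk' (fun n : ↥N => φ (tmul (↑n) z))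
      (fun n m => φhom (↑n) (↑m) z n.2 m.2) with hqdef
    have hq : ∀ n : ↥N, q n = φ (tmul (↑n) z) := fun n => rfl
    have key : ∀ u m v : ↥N,
        φ (tmul ((↑u*↑m*(↑u)⁻¹*(↑m)⁻¹) * ↑v * ((↑u*↑m*(↑u)⁻¹*(↑m)⁻¹):G)⁻¹) z)
          = φ (tmul (↑v) z) := by
      intro u m v
      have hd : ((↑u*↑m*(↑u)⁻¹*(↑m)⁻¹ : G)) ∈ N := by
        exact mul_mem (mul_mem (mul_mem u.2 m.2) (inv_mem u.2)) (inv_mem m.2)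
      have hA := tmul_mul_tmul (↑u : G) (↑m) (↑v) z
      have hφA := congrArg φ hA
      rw [map_mul, map_mul, φ0 _ _ u.2 m.2, one_mul, mul_one] at hφA
      rw [hφA]
      exact φcongr _ _ _ (Subgroup.Normal.conj_mem ‹N.Normal› _ v.2 _) (hπconj _ z hd).symm
    have step1 : ∀ u m v : ↥N, q ⁅⁅u, m⁆, v⁆ = 1 := by
      intro u m v
      rw [hq]
      have hco : ((⁅⁅u,m⁆,v⁆ : ↥N) : G)
          = ((↑u*↑m*(↑u)⁻¹*(↑m)⁻¹) * ↑v * ((↑u*↑m*(↑u)⁻¹*(↑m)⁻¹):G)⁻¹) * ((↑v : G))⁻¹ := by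
        simp only [commutatorElement_def]
        push_cast
        group
      rw [hco]
      have hd : ((↑u*↑m*(↑u)⁻¹*(↑m)⁻¹ : G)) ∈ N :=
        mul_mem (mul_mem (mul_mem u.2 m.2) (inv_mem u.2)) (inv_mem m.2)
      rw [φhom _ _ z (Subgroup.Normal.conj_mem ‹N.Normal› _ v.2 _) (inv_mem v.2)]
      rw [key u m v, φinvN _ _ v.2, mul_inv_cancel]
    have step2 : ∀ x y : ↥N, q ⁅x, y⁆ = 1 := by
      intro x y
      rw [map_commutatorElement, commutatorElement_eq_one_iff_commute]
      have hx : x ∈ Subgroup.closure (commutatorSet ↥N) := by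
        rw [← commutator_eq_closure, hperf]; trivial
      have hsub : commutatorSet ↥N ⊆ ↑((Subgroup.centralizer {q y}).comap q) := by
        rintro _ ⟨u, m, rfl⟩
        rw [SetLike.mem_coe, Subgroup.mem_comap, Subgroup.mem_centralizer_iff]
        intro w hw
        rw [Set.mem_singleton_iff] at hw
        subst hw
        have h1 := step1 u m y
        rw [map_commutatorElement, commutatorElement_eq_one_iff_commute] at h1
        exact h1.symm.eq
      have hmem := (Subgroup.closure_le _).mpr hsub hx
      rw [Subgroup.mem_comap, Subgroup.mem_centralizer_iff] at hmem
      have := hmem (q y) (Set.mem_singleton _)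
      exact Commute.symm this
    intro a ha
    have hmem : (⟨a, ha⟩ : ↥N) ∈ Subgroup.closure (commutatorSet ↥N) := by
      rw [← commutator_eq_closure, hperf]; trivial
    have hker : commutatorSet ↥N ⊆ ↑q.ker := by
      rintro _ ⟨x, y, rfl⟩
      rw [SetLike.mem_coe, MonoidHom.mem_ker]
      exact step2 x y
    have hq1 : q ⟨a, ha⟩ = 1 := (Subgroup.closure_le _).mpr hker hmem
    rw [← hq1]
    rfl
  -- ker (tmap π) ≤ normalClosure S0 ≤ comap L
  set S0 : Set (TS G) := {t | ∃ a g : G, a ∈ N ∧ (t = tmul a g ∨ t = tmul g a)} with hS0def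
  have hS0K : S0 ⊆ ↑(L.comap (QuotientGroup.mk' (delta G))) := by
    rintro t ⟨a, g, ha, (rfl | rfl)⟩
    · exact Subgroup.mem_comap.mpr ((hφ_iff _).mp (φmain g a ha))
    · refine Subgroup.mem_comap.mpr ((hφ_iff _).mp ?_)
      rw [φswap a g, φmain g a ha, inv_one]
  haveI : (L.comap (QuotientGroup.mk' (delta G))).Normal := hLnormal.comap _
  have hKnL : Subgroup.normalClosure S0 ≤ L.comap (QuotientGroup.mk' (delta G)) :=
    Subgroup.normalClosure_le_normal hS0K
  have hker_tmap : ∀ x : TS G, tmap π x = 1 → x ∈ Subgroup.normalClosure S0 := by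
    set Kn := Subgroup.normalClosure S0 with hKndef
    haveI : Kn.Normal := Subgroup.normalClosure_normal
    have hmod1 : ∀ g h : G,
        QuotientGroup.mk' Kn (tmul (σ (π g)) h) = QuotientGroup.mk' Kn (tmul g h) := by
      intro g h
      have hrel := tmul_rel₁ (σ (π g)) ((σ (π g))⁻¹ * g) h
      rw [show σ (π g) * ((σ (π g))⁻¹ * g) = g by group] at hrel
      have hmem : (g * (σ (π g))⁻¹ : G) ∈ N := by
        rw [← QuotientGroup.eq_one_iff (g * (σ (π g))⁻¹) (N := N)]
        have : π (g * (σ (π g))⁻¹) = 1 := by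
          rw [map_mul, map_inv, hσ]
          group
        rwa [hπdef, QuotientGroup.mk'_apply] at this
      have hone : QuotientGroup.mk' Kn (tmul (g * (σ (π g))⁻¹) (σ (π g) * h * (σ (π g))⁻¹)) = 1 :=
        (QuotientGroup.eq_one_iff _).mpr (Subgroup.subset_normalClosure
          ⟨g * (σ (π g))⁻¹, σ (π g) * h * (σ (π g))⁻¹, hmem, Or.inl rfl⟩)
      rw [hrel, map_mul, hone, one_mul]
    have hmod2 : ∀ g h : G,
        QuotientGroup.mk' Kn (tmul g (σ (π h))) = QuotientGroup.mk' Kn (tmul g h) := by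
      intro g h
      have hrel := tmul_rel₂ g (σ (π h)) ((σ (π h))⁻¹ * h)
      rw [show σ (π h) * ((σ (π h))⁻¹ * h) = h by group] at hrel
      have hmem : (h * (σ (π h))⁻¹ : G) ∈ N := by
        rw [← QuotientGroup.eq_one_iff (h * (σ (π h))⁻¹) (N := N)]
        have : π (h * (σ (π h))⁻¹) = 1 := by
          rw [map_mul, map_inv, hσ]
          group
        rwa [hπdef, QuotientGroup.mk'_apply] at this
      have hone : QuotientGroup.mk' Kn
          (tmul (σ (π h) * g * (σ (π h))⁻¹) (h * (σ (π h))⁻¹)) = 1 :=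
        (QuotientGroup.eq_one_iff _).mpr (Subgroup.subset_normalClosure
          ⟨h * (σ (π h))⁻¹, σ (π h) * g * (σ (π h))⁻¹, hmem, Or.inr rfl⟩)
      rw [hrel, map_mul, hone, mul_one]
    have hψ : ((QuotientGroup.mk' Kn).comp (tmap σ)).comp (tmap π) = QuotientGroup.mk' Kn := by
      apply PresentedGroup.ext
      rintro ⟨g, h⟩
      simp only [MonoidHom.comp_apply, of_eq_tmul, tmap_tmul]
      rw [hmod1 g (σ (π h)), hmod2 g h]
    intro x hx
    have hc := DFunLike.congr_fun hψ x
    rw [MonoidHom.comp_apply, hx, map_one] at hc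
    exact (QuotientGroup.eq_one_iff _).mp hc.symm
  have hyL : QuotientGroup.mk' (delta G) y ∈ L :=
    Subgroup.mem_comap.mp (hKnL (hker_tmap y hyπ))
  obtain ⟨_, ⟨w, rfl⟩, hw⟩ := hyL
  have hκw : kappa ↥N w = 1 := by
    have h1 : (tmap ι w)⁻¹ * y ∈ delta G := by
      rw [QuotientGroup.mk'_apply, QuotientGroup.mk'_apply] at hw
      exact QuotientGroup.eq.mp hw
    have h2 : kappa G ((tmap ι w)⁻¹ * y) = 1 := delta_le_ker_kappa h1
    rw [map_mul, map_inv, hyκ, mul_one, kappa_tmap, inv_eq_one] at h2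
    have : ι (kappa ↥N w) = ι 1 := by rw [map_one]; exact h2
    exact Subgroup.subtype_injective N this
  exact ⟨QuotientGroup.mk' (delta ↥N) w, ⟨w, hκw, rfl⟩, by rw [smap_mk]; exact hw⟩

end NATensor


open NATensor in
/-- if `N` is a perfect normal subgroup of `G` with a complement, then the
sequence `J̃(N) → J̃(G) → J̃(G/N) → 1` is exact: the map `J̃(G) → J̃(G/N)` (restriction of
the map induced by `G → G/N` on symmetric squares) is surjective and its kernel equals the
image of `J̃(N)` under the map induced by the inclusion `N → G`.  (Topologically:
`π₂ˢ(K(N,1)) → π₂ˢ(K(G,1)) → π₂ˢ(K(G/N,1)) → 0` is exact.) -/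
theorem Jt_exact_of_perfect_normal_complemented (G : Type*) [Group G]
    (N : Subgroup G) [N.Normal] (hperf : commutator ↥N = ⊤)
    (B : Subgroup G) (hB1 : N ⊔ B = ⊤) (hB2 : N ⊓ B = ⊥) :
    Subgroup.map (smap (QuotientGroup.mk' N)) (Jt G) = Jt (G ⧸ N) ∧
    Jt G ⊓ MonoidHom.ker (smap (QuotientGroup.mk' N)) =
      Subgroup.map (smap N.subtype) (Jt ↥N) := by
  classical
  set π := QuotientGroup.mk' N with hπdef
  -- construct the splitting σ
  have hker : ∀ b : B, π (↑b) = 1 → b = 1 := by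
    intro b hb
    have h1 : (b : G) ∈ N := (QuotientGroup.eq_one_iff _).mp (by rwa [hπdef,
      QuotientGroup.mk'_apply] at hb)
    have h2 : (b : G) ∈ N ⊓ B := ⟨h1, b.2⟩
    rw [hB2, Subgroup.mem_bot] at h2
    exact Subtype.ext h2
  have hinj : Function.Injective (π.comp B.subtype) := by
    rw [← MonoidHom.ker_eq_bot_iff, Subgroup.eq_bot_iff_forall]
    intro b hb
    exact hker b hb
  have hsurj : Function.Surjective (π.comp B.subtype) := by
    have h1 : Subgroup.map π (N ⊔ B) = ⊤ := by
      rw [hB1, ← MonoidHom.range_eq_map]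
      exact MonoidHom.range_eq_top.mpr (QuotientGroup.mk'_surjective N)
    rw [Subgroup.map_sup] at h1
    have h2 : Subgroup.map π N = ⊥ := by
      rw [eq_bot_iff]
      rintro _ ⟨n, hn, rfl⟩
      rw [Subgroup.mem_bot, hπdef, QuotientGroup.mk'_apply, QuotientGroup.eq_one_iff]
      exact hn
    rw [h2, bot_sup_eq] at h1
    intro q
    have hq : q ∈ Subgroup.map π B := by rw [h1]; trivial
    obtain ⟨b, hb, rfl⟩ := hq
    exact ⟨⟨b, hb⟩, rfl⟩
  set e : B ≃* G ⧸ N := MulEquiv.ofBijective (π.comp B.subtype) ⟨hinj, hsurj⟩ with hedef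
  set σ : (G ⧸ N) →* G := B.subtype.comp e.symm.toMonoidHom with hσdef
  have hσ : ∀ q, π (σ q) = q := by
    intro q
    have h1 : π (σ q) = (π.comp B.subtype) (e.symm q) := rfl
    have h2 : (π.comp B.subtype) (e.symm q) = e (e.symm q) := rfl
    rw [h1, h2, MulEquiv.apply_symm_apply]
  have hπσ : ∀ u : TS (G ⧸ N), tmap π (tmap σ u) = u := by
    intro u
    rw [tmap_tmap]
    have h : π.comp σ = MonoidHom.id (G ⧸ N) := MonoidHom.ext hσ
    rw [h, tmap_id]
  constructor
  · -- surjectivity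
    apply le_antisymm
    · rintro _ ⟨_, ⟨x, hx, rfl⟩, rfl⟩
      rw [smap_mk]
      refine ⟨tmap π x, ?_, rfl⟩
      show tmap π x ∈ (kappa (G ⧸ N)).ker
      rw [MonoidHom.mem_ker, kappa_tmap, show kappa G x = 1 from hx, map_one]
    · rintro _ ⟨y, hy, rfl⟩
      refine ⟨QuotientGroup.mk' (delta G) (tmap σ y), ⟨tmap σ y, ?_, rfl⟩, ?_⟩
      · show tmap σ y ∈ (kappa G).ker
        rw [MonoidHom.mem_ker, kappa_tmap, show kappa (G ⧸ N) y = 1 from hy, map_one]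
      · rw [smap_mk, hπσ]
  · -- kernel = image
    apply le_antisymm
    · intro ξ hξ
      rw [Subgroup.mem_inf] at hξ
      obtain ⟨⟨x, hx, rfl⟩, hξker⟩ := hξ
      rw [MonoidHom.mem_ker, smap_mk] at hξker
      have hxδ : tmap π x ∈ delta (G ⧸ N) := by
        rwa [QuotientGroup.mk'_apply, QuotientGroup.eq_one_iff] at hξker
      have hd : tmap σ (tmap π x) ∈ delta G := by
        have h1 := delta_le_comap_delta σ hxδ
        rw [MonoidHom.mem_ker, MonoidHom.comp_apply, QuotientGroup.mk'_apply,
          QuotientGroup.eq_one_iff] at h1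
        exact h1
      set y := x * (tmap σ (tmap π x))⁻¹ with hydef
      have hyπ : tmap π y = 1 := by
        rw [hydef, map_mul, map_inv, hπσ]
        group
      have hyκ : kappa G y = 1 := by
        rw [hydef, map_mul, map_inv, kappa_tmap, kappa_tmap,
          show kappa G x = 1 from hx, map_one, map_one]
        group
      have hmk : QuotientGroup.mk' (delta G) y = QuotientGroup.mk' (delta G) x := by
        have h1 : QuotientGroup.mk' (delta G) (tmap σ (tmap π x)) = 1 := by
          rw [QuotientGroup.mk'_apply]
          exact (QuotientGroup.eq_one_iff _).mpr hd
        rw [hydef, map_mul, map_inv, h1]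
        group
      rw [← hmk]
      exact core_mem hperf σ hσ y hyπ hyκ
    · rintro _ ⟨_, ⟨w, hw, rfl⟩, rfl⟩
      refine Subgroup.mem_inf.mpr ⟨?_, ?_⟩
      · rw [smap_mk]
        refine ⟨tmap N.subtype w, ?_, rfl⟩
        show tmap N.subtype w ∈ (kappa G).ker
        rw [MonoidHom.mem_ker, kappa_tmap, show kappa ↥N w = 1 from hw, map_one]
      · rw [MonoidHom.mem_ker, smap_mk, smap_mk, tmap_tmap]
        have h1 : tmap (π.comp N.subtype) w = 1 := by
          apply tmap_eq_one
          intro n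
          rw [MonoidHom.comp_apply, hπdef, QuotientGroup.mk'_apply, QuotientGroup.eq_one_iff]
          exact n.2
        rw [h1, map_one]
end

section
/- Let A be a finitely generated abelian group and let N be a normal subgroup of A ⊗ A with N ⊆ ∇(A). Then (A ⊗ A)/N ≅ (∇(A)/N) × (A ∧ A). -/
/- ===== Auxiliary development for the theorem ===== -/

namespace NATensorAux
open NATensor
open scoped DirectSum

variable {A : Type*} [CommGroup A]

lemma conj_eq (g x : A) : g * x * g⁻¹ = x := by
  rw [mul_comm g x, mul_inv_cancel_right]

lemma tmul_add_left (g g' h : A) : tmul (g * g') h = tmul g' h * tmul g h := by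
  have := tmul_rel₁ g g' h
  rwa [conj_eq, conj_eq] at this

lemma tmul_add_right (g h h' : A) : tmul g (h * h') = tmul g h * tmul g h' := by
  have := tmul_rel₂ g h h'
  rwa [conj_eq, conj_eq] at this

lemma tmul_comm_tmul (g h g' h' : A) :
    tmul g h * tmul g' h' = tmul g' h' * tmul g h := by
  have key : (tmul g' h * tmul g h) * (tmul g' h' * tmul g h') =
      (tmul g' h * tmul g' h') * (tmul g h * tmul g h') := by
    rw [← tmul_add_left g g' h, ← tmul_add_left g g' h',
      ← tmul_add_right (g * g') h h', ← tmul_add_right g' h h', ← tmul_add_right g h h',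
      ← tmul_add_left g g' (h * h')]
  have key' : tmul g' h * (tmul g h * (tmul g' h' * tmul g h')) =
      tmul g' h * (tmul g' h' * (tmul g h * tmul g h')) := by
    simpa [mul_assoc] using key
  have h2 := mul_left_cancel key'
  rw [← mul_assoc, ← mul_assoc] at h2
  exact mul_right_cancel h2

lemma tmul_central (g h : A) (y : TS A) : Commute (tmul g h) y := by
  induction y using QuotientGroup.induction_on with
  | H z =>
    refine FreeGroup.induction_on z ?_ ?_ ?_ ?_
    · exact Commute.one_right _
    · exact fun x => tmul_comm_tmul g h x.1 x.2
    · intro x hx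
      rw [QuotientGroup.mk_inv]
      exact hx.inv_right
    · intro x y hx hy
      rw [QuotientGroup.mk_mul]
      exact hx.mul_right hy

/-- For an abelian group `A`, the tensor square `A ⊗ A` is abelian. -/
abbrev tsCommGroup : CommGroup (TS A) :=
  { (inferInstance : Group (TS A)) with
    mul_comm := fun a b => by
      induction a using QuotientGroup.induction_on with
      | H z =>
        refine FreeGroup.induction_on z ?_ ?_ ?_ ?_
        · exact Commute.one_left _
        · exact fun x => tmul_central x.1 x.2 b
        · intro x hx
          rw [QuotientGroup.mk_inv]
          exact (Commute.inv_left hx)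
        · intro x y hx hy
          rw [QuotientGroup.mk_mul]
          exact Commute.mul_left hx hy }

attribute [local instance] tsCommGroup

/-- `tmul` as a homomorphism in the first variable. -/
def tmulL (h : A) : A →* TS A :=
  MonoidHom.mk' (fun g => tmul g h)
    (fun a b => by show tmul (a * b) h = tmul a h * tmul b h
                   rw [tmul_add_left, tmul_comm_tmul])

lemma tmul_mul_left (x x' y : A) : tmul (x * x') y = tmul x y * tmul x' y := by
  rw [tmul_add_left, tmul_comm_tmul]

/-- `tmul` as a homomorphism in the second variable. -/
def tmulR (g : A) : A →* TS A :=
  MonoidHom.mk' (fun h => tmul g h) (fun a b => tmul_add_right g a b)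

@[simp] lemma tmulL_apply (h g : A) : tmulL h g = tmul g h := rfl
@[simp] lemma tmulR_apply (g h : A) : tmulR g h = tmul g h := rfl

/-- `emul` as a homomorphism in the first variable. -/
def emulL (h : A) : A →* ES A := (QuotientGroup.mk' (nabla A)).comp (tmulL h)

/-- `emul` as a homomorphism in the second variable. -/
def emulR (g : A) : A →* ES A := (QuotientGroup.mk' (nabla A)).comp (tmulR g)

@[simp] lemma emulL_apply (h g : A) : emulL h g = emul g h := rfl
@[simp] lemma emulR_apply (g h : A) : emulR g h = emul g h := rfl

lemma emul_self (x : A) : emul x x = 1 := by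
  apply (QuotientGroup.eq_one_iff _).mpr
  exact Subgroup.subset_normalClosure ⟨x, rfl⟩

lemma emul_zpow (g : A) (m k : ℤ) : emul (g ^ m) (g ^ k) = 1 := by
  have h1 : emul (g ^ m) (g ^ k) = ((emul g g) ^ k) ^ m := by
    rw [show emul (g ^ m) (g ^ k) = emulL (g ^ k) (g ^ m) from rfl, map_zpow]
    rw [show emulL (g ^ k) g = emulR g (g ^ k) from rfl, map_zpow]
    rfl
  rw [h1, emul_self, one_zpow, one_zpow]

lemma emul_swap (g h : A) : emul h g = (emul g h)⁻¹ := by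
  have h1 : emul (g * h) (g * h) = 1 := emul_self _
  rw [show emul (g * h) (g * h) = emulL (g * h) (g * h) from rfl, map_mul] at h1
  rw [show emulL (g * h) g = emulR g (g * h) from rfl,
      show emulL (g * h) h = emulR h (g * h) from rfl, map_mul, map_mul] at h1
  simp only [emulR_apply] at h1
  rw [emul_self, emul_self, one_mul, mul_one] at h1
  exact (inv_eq_of_mul_eq_one_right h1).symm

private lemma prod_pairs {M : Type*} {ι : Type*} [CommGroup M] [Fintype ι] [LinearOrder ι]
    (d : ι → ι → M) (hd : ∀ i, d i i = 1) :
    (∏ i, ∏ j, if i < j then d i j * d j i else 1) = ∏ i, ∏ j, d i j := by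
  classical
  rw [← Finset.prod_product', ← Finset.prod_product']
  rw [← Finset.prod_filter_mul_prod_filter_not (Finset.univ ×ˢ Finset.univ)
        (fun p : ι × ι => p.1 < p.2) (fun p => d p.1 p.2)]
  rw [← Finset.prod_filter]
  rw [Finset.prod_mul_distrib]
  congr 1
  rw [← Finset.prod_filter_mul_prod_filter_not
        ((Finset.univ ×ˢ Finset.univ).filter (fun p : ι × ι => ¬ p.1 < p.2))
        (fun p : ι × ι => p.2 < p.1) (fun p => d p.1 p.2)]
  have e1 : ((Finset.univ ×ˢ Finset.univ).filter (fun p : ι × ι => ¬ p.1 < p.2)).filter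
      (fun p : ι × ι => p.2 < p.1)
      = (Finset.univ ×ˢ Finset.univ).filter (fun p : ι × ι => p.2 < p.1) := by
    rw [Finset.filter_filter]
    exact Finset.filter_congr (fun p _ => ⟨And.right, fun h => ⟨lt_asymm h, h⟩⟩)
  have e2 : (∏ p ∈ ((Finset.univ ×ˢ Finset.univ).filter
        (fun p : ι × ι => ¬ p.1 < p.2)).filter (fun p : ι × ι => ¬ p.2 < p.1),
        d p.1 p.2) = 1 := by
    apply Finset.prod_eq_one
    intro p hp
    simp only [Finset.mem_filter] at hp
    have hpp : p.1 = p.2 := le_antisymm (not_lt.mp hp.2) (not_lt.mp hp.1.2)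
    rw [← hpp]
    exact hd p.1
  rw [e1, e2, mul_one]
  exact (Finset.prod_nbij' Prod.swap Prod.swap
    (by simp) (by simp) (by simp) (by simp) (fun p _ => rfl))

variable (A)

/-- Abstract splitting criterion: if `A` is covered by finitely many ordered "cyclic"
projections, then the projection `A ⊗ A → A ∧ A` splits. -/
lemma exists_section (ι : Type) [Fintype ι] [LinearOrder ι] (π : ι → (A →* A))
    (hsum : ∀ a : A, ∏ i, π i a = a)
    (hcyc : ∀ (i : ι) (a b : A), emul (π i a) (π i b) = (1 : ES A)) :
    ∃ s : ES A →* TS A, ∀ t : TS A,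
      QuotientGroup.mk' (nabla A) (s (QuotientGroup.mk' (nabla A) t))
        = QuotientGroup.mk' (nabla A) t := by
  classical
  set c : ι → ι → A → A → TS A := fun i j a b =>
    if i < j then tmul (π i a) (π j b) * (tmul (π i b) (π j a))⁻¹ else 1 with hc
  set f : A → A → TS A := fun a b => ∏ i, ∏ j, c i j a b with hf
  have c_mul_left : ∀ i j a a' b, c i j (a * a') b = c i j a b * c i j a' b := by
    intro i j a a' b
    simp only [hc]
    split_ifs with h
    · simp only [map_mul, tmul_mul_left, tmul_add_right, mul_inv]
      exact mul_mul_mul_comm _ _ _ _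
    · rw [one_mul]
  have c_mul_right : ∀ i j a b b', c i j a (b * b') = c i j a b * c i j a b' := by
    intro i j a b b'
    simp only [hc]
    split_ifs with h
    · simp only [map_mul, tmul_mul_left, tmul_add_right, mul_inv]
      exact mul_mul_mul_comm _ _ _ _
    · rw [one_mul]
  have f_mul_left : ∀ a a' b, f (a * a') b = f a b * f a' b := by
    intro a a' b
    simp only [hf, ← Finset.prod_mul_distrib]
    exact Finset.prod_congr rfl fun i _ =>
      Finset.prod_congr rfl fun j _ => c_mul_left i j a a' b
  have f_mul_right : ∀ a b b', f a (b * b') = f a b * f a b' := by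
    intro a b b'
    simp only [hf, ← Finset.prod_mul_distrib]
    exact Finset.prod_congr rfl fun i _ =>
      Finset.prod_congr rfl fun j _ => c_mul_right i j a b b'
  have hrel : ∀ r ∈ rels A, FreeGroup.lift (fun x : A × A => f x.1 x.2) r = 1 := by
    rintro r (⟨g, g', h, rfl⟩ | ⟨g, h, h', rfl⟩) <;>
      simp only [map_mul, map_inv, FreeGroup.lift_apply_of, mul_inv_eq_one, conj_eq]
    · rw [f_mul_left, mul_comm]
    · rw [f_mul_right]
  let S : TS A →* TS A := PresentedGroup.toGroup hrel
  have S_tmul : ∀ a b : A, S (tmul a b) = f a b := fun a b => PresentedGroup.toGroup.of hrel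
  have hker : nabla A ≤ S.ker := by
    refine Subgroup.normalClosure_le_normal ?_
    rintro _ ⟨x, rfl⟩
    simp only [SetLike.mem_coe, MonoidHom.mem_ker, S_tmul]
    refine Finset.prod_eq_one fun i _ => Finset.prod_eq_one fun j _ => ?_
    simp only [hc]
    split_ifs with h <;> simp
  let s : ES A →* TS A :=
    QuotientGroup.lift (nabla A) S (fun x hx => MonoidHom.mem_ker.mp (hker hx))
  refine ⟨s, fun t => ?_⟩
  have hs : s (QuotientGroup.mk' (nabla A) t) = S t := rfl
  rw [hs]
  have key : (QuotientGroup.mk' (nabla A)).comp S = QuotientGroup.mk' (nabla A) := by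
    refine PresentedGroup.ext fun x => ?_
    show QuotientGroup.mk' (nabla A) (S (tmul x.1 x.2)) = emul x.1 x.2
    rw [S_tmul]
    set d : ι → ι → ES A := fun i j => emul (π i x.1) (π j x.2) with hd
    have lhs_eq : QuotientGroup.mk' (nabla A) (f x.1 x.2)
        = ∏ i, ∏ j, if i < j then d i j * d j i else 1 := by
      rw [hf]
      rw [map_prod]
      refine Finset.prod_congr rfl fun i _ => ?_
      rw [map_prod]
      refine Finset.prod_congr rfl fun j _ => ?_
      simp only [hc, apply_ite (QuotientGroup.mk' (nabla A)), map_mul, map_inv, map_one]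
      congr 1
      show emul (π i x.1) (π j x.2) * (emul (π i x.2) (π j x.1))⁻¹ = d i j * d j i
      rw [← emul_swap]
    have rhs_eq : emul x.1 x.2 = ∏ i, ∏ j, d i j := by
      conv_lhs => rw [← hsum x.1, ← hsum x.2]
      rw [show emul (∏ i, π i x.1) (∏ j, π j x.2)
            = emulL (∏ j, π j x.2) (∏ i, π i x.1) from rfl, map_prod]
      refine Finset.prod_congr rfl fun i _ => ?_
      rw [show emulL (∏ j, π j x.2) (π i x.1) = emulR (π i x.1) (∏ j, π j x.2) from rfl,
        map_prod]
      rfl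
    rw [lhs_eq, rhs_eq]
    exact prod_pairs d (fun i => hcyc i x.1 x.2)
  calc QuotientGroup.mk' (nabla A) (S t)
      = ((QuotientGroup.mk' (nabla A)).comp S) t := rfl
    _ = QuotientGroup.mk' (nabla A) t := by rw [key]

/- ===== Instantiation via the structure theorem ===== -/

variable {A}

/-- Conjugating an additive endomorphism of `B` by an isomorphism `A ≃* Multiplicative B`. -/
private noncomputable def pihom {B : Type*} [AddCommGroup B] (E : A ≃* Multiplicative B) (ρ : B →+ B) :
    A →* A :=
  E.symm.toMonoidHom.comp ((AddMonoidHom.toMultiplicative ρ).comp E.toMonoidHom)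

private lemma pihom_apply {B : Type*} [AddCommGroup B] (E : A ≃* Multiplicative B)
    (ρ : B →+ B) (a : A) :
    pihom E ρ a = E.symm (Multiplicative.ofAdd (ρ (Multiplicative.toAdd (E a)))) := rfl

private lemma ofAdd_zsmul' {B : Type*} [AddCommGroup B] (m : ℤ) (x : B) :
    Multiplicative.ofAdd (m • x) = (Multiplicative.ofAdd x) ^ m := by
  apply Multiplicative.toAdd.injective
  simp [toAdd_zpow]

private lemma pihom_cyclic {B : Type*} [AddCommGroup B] (E : A ≃* Multiplicative B)
    (ρ : B →+ B) (σ : ℤ →+ B) (h : ∀ b : B, ∃ m : ℤ, ρ b = σ m) :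
    ∃ g : A, ∀ a : A, ∃ m : ℤ, pihom E ρ a = g ^ m := by
  refine ⟨E.symm (Multiplicative.ofAdd (σ 1)), fun a => ?_⟩
  obtain ⟨m, hm⟩ := h (Multiplicative.toAdd (E a))
  refine ⟨m, ?_⟩
  have h1 : σ m = m • σ 1 := by
    rw [← map_zsmul σ m 1, smul_eq_mul, mul_one]
  rw [pihom_apply, hm, h1, ofAdd_zsmul', map_zpow]

private lemma pihom_sum {B : Type*} [AddCommGroup B] (E : A ≃* Multiplicative B)
    {ι : Type*} [Fintype ι] (ρ : ι → (B →+ B)) (h : ∀ b : B, ∑ i, ρ i b = b) (a : A) :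
    ∏ i, pihom E (ρ i) a = a := by
  simp only [pihom_apply]
  rw [← map_prod, ← ofAdd_sum, h, ofAdd_toAdd, MulEquiv.symm_apply_apply]

private noncomputable def rhoFree (n : ℕ) (M : Type*) [AddCommGroup M] (i : Fin n) :
    ((Fin n →₀ ℤ) × M) →+ ((Fin n →₀ ℤ) × M) :=
  (AddMonoidHom.inl _ _).comp ((Finsupp.singleAddHom i).comp
    ((Finsupp.applyAddHom i).comp (AddMonoidHom.fst _ _)))

private lemma rhoFree_apply (n : ℕ) (M : Type*) [AddCommGroup M] (i : Fin n)
    (b : (Fin n →₀ ℤ) × M) : rhoFree n M i b = (Finsupp.single i (b.1 i), 0) := rfl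

private noncomputable def rhoTor {ι : Type} [DecidableEq ι] (q : ι → ℕ) (M : Type*) [AddCommGroup M] (i : ι) :
    (M × ⨁ j, ZMod (q j)) →+ (M × ⨁ j, ZMod (q j)) :=
  (AddMonoidHom.inr _ _).comp ((DirectSum.of (fun j => ZMod (q j)) i).comp
    ((DFinsupp.evalAddMonoidHom i).comp (AddMonoidHom.snd _ _)))

private lemma rhoTor_apply {ι : Type} [DecidableEq ι] (q : ι → ℕ) (M : Type*) [AddCommGroup M]
    (i : ι) (b : M × ⨁ j, ZMod (q j)) :
    rhoTor q M i b = (0, DirectSum.of (fun j => ZMod (q j)) i (b.2 i)) := rfl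

variable (A)

/-- For a finitely generated abelian group `A`, `A ⊗ A → A ∧ A` splits. -/
lemma exists_section_fg [Group.FG A] :
    ∃ s : ES A →* TS A, ∀ t : TS A,
      QuotientGroup.mk' (nabla A) (s (QuotientGroup.mk' (nabla A) t))
        = QuotientGroup.mk' (nabla A) t := by
  classical
  obtain ⟨n, ι, fι, p, hp, e, ⟨eq⟩⟩ :=
    AddCommGroup.equiv_free_prod_directSum_zmod (Additive A)
  haveI := fι
  set B := ((Fin n →₀ ℤ) × ⨁ i : ι, ZMod (p i ^ e i)) with hB
  let E : A ≃* Multiplicative B := AddEquiv.toMultiplicativeRight eq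
  let ρ : (Fin n ⊕ ι) → (B →+ B) := fun i =>
    Sum.rec (fun i => rhoFree n _ i) (fun i => rhoTor (fun i => p i ^ e i) _ i) i
  letI : LinearOrder (Fin n ⊕ ι) :=
    LinearOrder.lift' (Fintype.equivFin (Fin n ⊕ ι)) (Fintype.equivFin (Fin n ⊕ ι)).injective
  have hsumB : ∀ b : B, ∑ i, ρ i b = b := by
    intro b
    rw [Fintype.sum_sum_type]
    have h1 : (∑ i : Fin n, ρ (Sum.inl i) b) = ((b.1 : Fin n →₀ ℤ), (0 : ⨁ i : ι, ZMod (p i ^ e i))) := by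
      have : ∀ i : Fin n, ρ (Sum.inl i) b
          = AddMonoidHom.inl (Fin n →₀ ℤ) (⨁ i : ι, ZMod (p i ^ e i)) (Finsupp.single i (b.1 i)) :=
        fun i => rfl
      simp only [this]
      rw [← map_sum, Finsupp.univ_sum_single]
      rfl
    have h2 : (∑ i : ι, ρ (Sum.inr i) b) = ((0 : Fin n →₀ ℤ), b.2) := by
      have : ∀ i : ι, ρ (Sum.inr i) b
          = AddMonoidHom.inr (Fin n →₀ ℤ) (⨁ i : ι, ZMod (p i ^ e i))
              (DirectSum.of (fun j => ZMod (p j ^ e j)) i (b.2 i)) :=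
        fun i => rfl
      simp only [this]
      rw [← map_sum, DirectSum.sum_univ_of]
      rfl
    rw [h1, h2, Prod.mk_add_mk, add_zero, zero_add]
  have hcycB : ∀ i : Fin n ⊕ ι, ∃ g : A, ∀ a : A, ∃ m : ℤ, pihom E (ρ i) a = g ^ m := by
    rintro (i | i)
    · refine pihom_cyclic E _
        ((AddMonoidHom.inl _ _).comp (Finsupp.singleAddHom i)) (fun b => ⟨b.1 i, rfl⟩)
    · haveI : NeZero (p i ^ e i) := ⟨pow_ne_zero _ (hp i).ne_zero⟩
      refine pihom_cyclic E _
        ((AddMonoidHom.inr _ _).comp ((DirectSum.of (fun j => ZMod (p j ^ e j)) i).comp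
          (Int.castAddHom (ZMod (p i ^ e i))))) (fun b => ⟨((b.2 i).val : ℤ), ?_⟩)
      rw [rhoTor_apply]
      have : ((((b.2 i).val : ℤ) : ZMod (p i ^ e i))) = b.2 i := by
        rw [Int.cast_natCast]
        exact ZMod.natCast_rightInverse (b.2 i)
      simp only [AddMonoidHom.coe_comp, Function.comp_apply, Int.coe_castAddHom, this]
      rfl
  refine exists_section A (Fin n ⊕ ι) (fun i => pihom E (ρ i))
    (fun a => pihom_sum E ρ hsumB a) ?_
  intro i a b
  obtain ⟨g, hg⟩ := hcycB i
  obtain ⟨m, hm⟩ := hg a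
  obtain ⟨k, hk⟩ := hg b
  rw [hm, hk]
  exact emul_zpow g m k

end NATensorAux


open NATensor in
/-- for a finitely generated abelian group `A` and a normal subgroup `N` of
`A ⊗ A` with `N ⊆ ∇(A)`, one has `(A ⊗ A)/N ≅ (∇(A)/N) × (A ∧ A)`
(here `∇(A)/N` is realized as the image of `∇(A)` in `(A ⊗ A)/N`). -/
theorem tensor_square_quotient_of_fg_abelian (A : Type*) [CommGroup A] [Group.FG A]
    (N : Subgroup (TS A)) [N.Normal] (hN : N ≤ nabla A) :
    Nonempty ((TS A ⧸ N) ≃*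
      ↥(Subgroup.map (QuotientGroup.mk' N) (nabla A)) × ES A) := by
  classical
  letI : CommGroup (TS A) := NATensorAux.tsCommGroup
  obtain ⟨s, hs⟩ := NATensorAux.exists_section_fg A
  set mkN := QuotientGroup.mk' N with hmkN
  set mkE := QuotientGroup.mk' (nabla A) with hmkE
  let pibar : (TS A ⧸ N) →* ES A :=
    QuotientGroup.lift N mkE (fun x hx => (QuotientGroup.eq_one_iff x).mpr (hN hx))
  have pibar_mk : ∀ t : TS A, pibar (mkN t) = mkE t := fun t => rfl
  let s' : ES A →* (TS A ⧸ N) := mkN.comp s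
  have hps' : ∀ w : ES A, pibar (s' w) = w := by
    intro w
    induction w using QuotientGroup.induction_on with
    | H t =>
      have hw : (QuotientGroup.mk t : ES A) = mkE t := rfl
      rw [hw]
      show pibar (mkN (s (mkE t))) = mkE t
      rw [pibar_mk]
      exact hs t
  set K := Subgroup.map mkN (nabla A) with hK
  have hKone : ∀ k ∈ K, pibar k = 1 := by
    rintro _ ⟨u, hu, rfl⟩
    rw [pibar_mk]
    exact (QuotientGroup.eq_one_iff u).mpr hu
  let θ : (TS A ⧸ N) →* (TS A ⧸ N) := (MonoidHom.id _) * (s'.comp pibar)⁻¹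
  have θ_apply : ∀ q, θ q = q * (s' (pibar q))⁻¹ := fun q => rfl
  have hθ : ∀ q, θ q ∈ K := by
    intro q
    induction q using QuotientGroup.induction_on with
    | H t =>
      have hq : (QuotientGroup.mk t : TS A ⧸ N) = mkN t := rfl
      rw [θ_apply, hq, pibar_mk]
      have h1 : mkN t * (s' (mkE t))⁻¹ = mkN (t * (s (mkE t))⁻¹) := by
        simp [s', map_mul, map_inv]
      rw [h1]
      refine ⟨t * (s (mkE t))⁻¹, ?_, rfl⟩
      have h2 : mkE (t * (s (mkE t))⁻¹) = 1 := by
        rw [map_mul, map_inv, hs t, mul_inv_cancel]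
      exact (QuotientGroup.eq_one_iff _).mp h2
  let φ : (TS A ⧸ N) →* K × ES A := (θ.codRestrict K hθ).prod pibar
  let ψ : K × ES A → (TS A ⧸ N) := fun kw => (kw.1 : TS A ⧸ N) * s' kw.2
  refine ⟨{ toFun := φ, invFun := ψ, map_mul' := φ.map_mul, left_inv := ?_, right_inv := ?_ }⟩
  · intro q
    show (θ q : TS A ⧸ N) * s' (pibar q) = q
    rw [θ_apply]
    exact inv_mul_cancel_right _ _
  · rintro ⟨⟨k, hk⟩, w⟩
    have hpk : pibar k = 1 := hKone k hk
    have hp2 : pibar (k * s' w) = w := by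
      rw [map_mul, hpk, one_mul, hps']
    refine Prod.ext (Subtype.ext ?_) ?_
    · show θ (k * s' w) = k
      rw [θ_apply, hp2]
      exact mul_inv_cancel_right _ _
    · exact hp2
end
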